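/- For all m, n ≥ 3 there exist regular languages L' and L such that L' has quotient complexity m, L has quotient complexity n, the alphabet of L is a proper subset of the alphabet of L' (with |Σ_{L'}| = 3 and |Σ_L| = 2), and the set difference satisfies κ(L' \ L) = m·n + m. -/

import Mathlib

/-- The alphabet of a language: letters occurring in some word of `L`. -/
def alphabetOf {α : Type*} (L : Language α) : Set α :=
  {a | ∃ u v : List α, u ++ [a] ++ v ∈ L}

/-- The left quotient of `L` by a word `w`. -/
def leftQuotient {α : Type*} (L : Language α) (w : List α) : Language α :=
  {x | w ++ x ∈ L}

/-- The set of left quotients of `L` by words over the alphabet of `L`. -/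
def quotientSet {α : Type*} (L : Language α) : Set (Language α) :=
  {K | ∃ w : List α, (∀ a ∈ w, a ∈ alphabetOf L) ∧ K = leftQuotient L w}

/-- `L` is regular with quotient complexity `m`: the set of its left quotients
(by words over its own alphabet) is finite of cardinality exactly `m`. -/
def HasComplexity {α : Type*} (L : Language α) (m : ℕ) : Prop :=
  (quotientSet L).Finite ∧ (quotientSet L).ncard = m

/-- All words whose letters lie in `S`. -/
def starOf {α : Type*} (S : Set α) : Language α :=
  {w | ∀ a ∈ w, a ∈ S}

/-- A nonempty language `L` is a right ideal if `L · Σ_L^* = L`. -/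
def IsRightIdeal {α : Type*} (L : Language α) : Prop :=
  (∃ w, w ∈ L) ∧ L * starOf (alphabetOf L) = L

/-- A nonempty language `L` is a left ideal if `Σ_L^* · L = L`. -/
def IsLeftIdeal {α : Type*} (L : Language α) : Prop :=
  (∃ w, w ∈ L) ∧ starOf (alphabetOf L) * L = L

/-- A nonempty language `L` is a two-sided ideal if `Σ_L^* · L · Σ_L^* = L`. -/
def IsTwoSidedIdeal {α : Type*} (L : Language α) : Prop :=
  (∃ w, w ∈ L) ∧ starOf (alphabetOf L) * L * starOf (alphabetOf L) = L

namespace DT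

/-- `Q1 m s`: words whose number of `1`s is `s` mod `m`. -/
def Q1 (m : ℕ) (s : ZMod m) : Language (Fin 3) := {x | ((x.count 1 : ℕ) : ZMod m) = s}

/-- `Q2 n t`: words over `{0,1}` whose number of `0`s is `t` mod `n`. -/
def Q2 (n : ℕ) (t : ZMod n) : Language (Fin 3) :=
  {x | (∀ a ∈ x, a ≠ 2) ∧ ((x.count 0 : ℕ) : ZMod n) = t}

/-- Quotients of the difference language by words not containing `2`. -/
def QD (m n : ℕ) (s : ZMod m) (t : ZMod n) : Language (Fin 3) :=
  {x | ((x.count 1 : ℕ) : ZMod m) = s ∧ x ∉ Q2 n t}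

lemma mem_Q1 {m : ℕ} {s : ZMod m} {x : List (Fin 3)} :
    x ∈ Q1 m s ↔ ((x.count 1 : ℕ) : ZMod m) = s := Iff.rfl
lemma mem_Q2 {n : ℕ} {t : ZMod n} {x : List (Fin 3)} :
    x ∈ Q2 n t ↔ (∀ a ∈ x, a ≠ 2) ∧ ((x.count 0 : ℕ) : ZMod n) = t := Iff.rfl
lemma mem_QD {m n : ℕ} {s : ZMod m} {t : ZMod n} {x : List (Fin 3)} :
    x ∈ QD m n s t ↔ ((x.count 1 : ℕ) : ZMod m) = s ∧ x ∉ Q2 n t := Iff.rfl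

-- elementary count facts
lemma c11 (k : ℕ) : (List.replicate k (1:Fin 3)).count 1 = k := by simp
lemma c10 (k : ℕ) : (List.replicate k (1:Fin 3)).count 0 = 0 := by
  simp [List.count_replicate]
lemma c00 (k : ℕ) : (List.replicate k (0:Fin 3)).count 0 = k := by simp
lemma c01 (k : ℕ) : (List.replicate k (0:Fin 3)).count 1 = 0 := by
  simp [List.count_replicate]
lemma nm1 (k : ℕ) : (2:Fin 3) ∉ List.replicate k (1:Fin 3) := by
  simp [List.mem_replicate]
lemma nm0 (k : ℕ) : (2:Fin 3) ∉ List.replicate k (0:Fin 3) := by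
  simp [List.mem_replicate]

lemma vcast {m : ℕ} [NeZero m] (a : ZMod m) : ((a.val : ℕ) : ZMod m) = a := by
  simp [ZMod.natCast_val, ZMod.cast_id]

lemma cast_pred {m : ℕ} (hm : 1 ≤ m) : ((m - 1 : ℕ) : ZMod m) = -1 := by
  push_cast [hm]; simp

lemma small_ne {n : ℕ} (hn : 3 ≤ n) {j : ℕ} (hj : j + 1 < n) :
    ((j : ℕ) : ZMod n) ≠ -1 := by
  haveI : NeZero n := ⟨by omega⟩
  rw [← cast_pred (by omega : 1 ≤ n)]
  intro h
  have := congrArg ZMod.val h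
  rw [ZMod.val_cast_of_lt (by omega), ZMod.val_cast_of_lt (by omega)] at this
  omega

lemma fin3 (a : Fin 3) : a = 0 ∨ a = 1 ∨ a = 2 := by revert a; decide

lemma count1_shift {m : ℕ} (s : ZMod m) (w x : List (Fin 3)) :
    (((w ++ x).count 1 : ℕ) : ZMod m) = s ↔ ((x.count 1 : ℕ) : ZMod m) = s - w.count 1 := by
  rw [List.count_append, Nat.cast_add]
  constructor <;> intro h
  · rw [← h]; ring
  · rw [h]; ring

lemma count0_shift {n : ℕ} (t : ZMod n) (w x : List (Fin 3)) :
    (((w ++ x).count 0 : ℕ) : ZMod n) = t ↔ ((x.count 0 : ℕ) : ZMod n) = t - w.count 0 := by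
  rw [List.count_append, Nat.cast_add]
  constructor <;> intro h
  · rw [← h]; ring
  · rw [h]; ring

lemma lq_Q1 (m : ℕ) (s : ZMod m) (w : List (Fin 3)) :
    leftQuotient (Q1 m s) w = Q1 m (s - w.count 1) := by
  ext x
  show (((w ++ x).count 1 : ℕ) : ZMod m) = s ↔ _
  exact count1_shift s w x

lemma mem_Q2_append {n : ℕ} {t : ZMod n} {w x : List (Fin 3)} :
    w ++ x ∈ Q2 n t ↔ ((∀ a ∈ w, a ≠ 2) ∧ x ∈ Q2 n (t - w.count 0)) := by
  rw [mem_Q2, mem_Q2, count0_shift]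
  simp only [List.mem_append]
  constructor
  · rintro ⟨h1, h2⟩
    exact ⟨fun a ha => h1 a (Or.inl ha), fun a ha => h1 a (Or.inr ha), h2⟩
  · rintro ⟨h0, h1, h2⟩
    exact ⟨fun a ha => ha.elim (h0 a) (h1 a), h2⟩

lemma lq_Q2 {n : ℕ} {t : ZMod n} {w : List (Fin 3)} (hw : ∀ a ∈ w, a ≠ 2) :
    leftQuotient (Q2 n t) w = Q2 n (t - w.count 0) := by
  ext x
  show w ++ x ∈ Q2 n t ↔ _
  rw [mem_Q2_append]
  exact ⟨fun h => h.2, fun h => ⟨hw, h⟩⟩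

lemma lq_D_c {m n : ℕ} {w : List (Fin 3)} (hw : (2:Fin 3) ∈ w) :
    leftQuotient (Q1 m (-1) \ Q2 n (-1)) w = Q1 m (-1 - w.count 1) := by
  ext x
  show (w ++ x ∈ Q1 m (-1) ∧ w ++ x ∉ Q2 n (-1)) ↔ _
  rw [mem_Q1, count1_shift, ← mem_Q1]
  refine and_iff_left ?_
  rw [mem_Q2]
  rintro ⟨hall, -⟩
  exact hall 2 (List.mem_append.2 (Or.inl hw)) rfl

lemma lq_D_nc {m n : ℕ} {w : List (Fin 3)} (hw : (2:Fin 3) ∉ w) :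
    leftQuotient (Q1 m (-1) \ Q2 n (-1)) w
      = QD m n (-1 - w.count 1) (-1 - w.count 0) := by
  have hw' : ∀ a ∈ w, a ≠ 2 := fun a ha h => hw (h ▸ ha)
  ext x
  show (w ++ x ∈ Q1 m (-1) ∧ w ++ x ∉ Q2 n (-1)) ↔ x ∈ QD m n _ _
  rw [mem_QD, mem_Q1, count1_shift, mem_Q2_append, and_iff_right hw']

-- alphabets
lemma alpha_L1 {m : ℕ} (hm : 3 ≤ m) : alphabetOf (Q1 m (-1)) = Set.univ := by
  apply Set.eq_univ_of_forall
  intro a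
  rcases eq_or_ne a 1 with rfl | h
  · refine ⟨[], List.replicate (m-2) 1, ?_⟩
    have hc : ([] ++ [(1:Fin 3)] ++ List.replicate (m-2) 1).count 1 = m - 1 := by
      simp; omega
    rw [mem_Q1, hc, cast_pred (by omega)]
  · refine ⟨[], List.replicate (m-1) 1, ?_⟩
    have hc : ([] ++ [a] ++ List.replicate (m-1) 1).count 1 = m - 1 := by
      simp [List.count_cons, Ne.symm h, h]
    rw [mem_Q1, hc, cast_pred (by omega)]

lemma alpha_L2 {n : ℕ} (hn : 3 ≤ n) : alphabetOf (Q2 n (-1)) = {a : Fin 3 | a ≠ 2} := by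
  ext a
  constructor
  · rintro ⟨u, v, hmem⟩
    exact hmem.1 a (by simp)
  · intro ha
    rcases fin3 a with rfl | rfl | rfl
    · refine ⟨[], List.replicate (n-2) 0, ?_, ?_⟩
      · intro b hb
        simp only [List.nil_append, List.cons_append, List.mem_cons] at hb
        rcases hb with rfl | hb
        · decide
        · rw [List.eq_of_mem_replicate hb]; decide
      · have hc : ([] ++ [(0:Fin 3)] ++ List.replicate (n-2) 0).count 0 = n - 1 := by
          simp; omega
        rw [hc, cast_pred (by omega)]
    · refine ⟨List.replicate (n-1) 0, [], ?_, ?_⟩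
      · intro b hb
        simp only [List.append_nil, List.mem_append, List.mem_singleton] at hb
        rcases hb with hb | rfl
        · rw [List.eq_of_mem_replicate hb]; decide
        · decide
      · have hc : (List.replicate (n-1) 0 ++ [(1:Fin 3)] ++ []).count 0 = n - 1 := by
          simp [List.count_cons]
        rw [hc, cast_pred (by omega)]
    · exact absurd rfl ha

lemma alpha_D {m n : ℕ} (hm : 3 ≤ m) (hn : 3 ≤ n) :
    alphabetOf (Q1 m (-1) \ Q2 n (-1)) = Set.univ := by
  apply Set.eq_univ_of_forall
  intro a
  rcases fin3 a with rfl | rfl | rfl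
  · -- letter 0, word 0 · 1^(m-1)
    refine ⟨[], List.replicate (m-1) 1, ?_, ?_⟩
    · have hc : ([] ++ [(0:Fin 3)] ++ List.replicate (m-1) 1).count 1 = m - 1 := by
        simp [List.count_cons]
      show _ ∈ Q1 m (-1); rw [mem_Q1, hc, cast_pred (by omega)]
    · show _ ∉ Q2 n (-1); rw [mem_Q2]
      rintro ⟨-, hcnt⟩
      have hc : ([] ++ [(0:Fin 3)] ++ List.replicate (m-1) 1).count 0 = 1 := by
        simp [List.count_cons, List.count_replicate]
      rw [hc] at hcnt
      exact small_ne hn (by omega) hcnt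
  · -- letter 1, word 1^(m-1)
    refine ⟨[], List.replicate (m-2) 1, ?_, ?_⟩
    · have hc : ([] ++ [(1:Fin 3)] ++ List.replicate (m-2) 1).count 1 = m - 1 := by
        simp; omega
      show _ ∈ Q1 m (-1); rw [mem_Q1, hc, cast_pred (by omega)]
    · show _ ∉ Q2 n (-1); rw [mem_Q2]
      rintro ⟨-, hcnt⟩
      have hc : ([] ++ [(1:Fin 3)] ++ List.replicate (m-2) 1).count 0 = 0 := by
        simp [List.count_cons, List.count_replicate]
      rw [hc] at hcnt
      exact small_ne hn (by omega) hcnt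
  · -- letter 2, word 2 · 1^(m-1)
    refine ⟨[], List.replicate (m-1) 1, ?_, ?_⟩
    · have hc : ([] ++ [(2:Fin 3)] ++ List.replicate (m-1) 1).count 1 = m - 1 := by
        simp [List.count_cons]
      show _ ∈ Q1 m (-1); rw [mem_Q1, hc, cast_pred (by omega)]
    · show _ ∉ Q2 n (-1); rw [mem_Q2]
      rintro ⟨hall, -⟩
      exact hall 2 (by simp) rfl

-- quotient sets
lemma qs_L1 {m : ℕ} (hm : 3 ≤ m) : quotientSet (Q1 m (-1)) = Set.range (Q1 m) := by
  haveI : NeZero m := ⟨by omega⟩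
  ext K
  constructor
  · rintro ⟨w, -, rfl⟩
    exact ⟨-1 - w.count 1, (lq_Q1 m (-1) w).symm⟩
  · rintro ⟨s, rfl⟩
    refine ⟨List.replicate (-1 - s).val 1, fun a _ => by rw [alpha_L1 hm]; trivial, ?_⟩
    rw [lq_Q1, c11, vcast, sub_sub_cancel]

lemma qs_L2 {n : ℕ} (hn : 3 ≤ n) : quotientSet (Q2 n (-1)) = Set.range (Q2 n) := by
  haveI : NeZero n := ⟨by omega⟩
  ext K
  constructor
  · rintro ⟨w, hw, rfl⟩
    have hw' : ∀ a ∈ w, a ≠ 2 := by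
      intro a ha
      have := hw a ha
      rwa [alpha_L2 hn] at this
    exact ⟨-1 - w.count 0, (lq_Q2 hw').symm⟩
  · rintro ⟨t, rfl⟩
    refine ⟨List.replicate (-1 - t).val 0, ?_, ?_⟩
    · intro a ha
      rw [alpha_L2 hn]
      rw [List.eq_of_mem_replicate ha]
      decide
    · rw [lq_Q2 (fun a ha h => nm0 _ (h ▸ ha)), c00, vcast, sub_sub_cancel]

lemma qs_D {m n : ℕ} (hm : 3 ≤ m) (hn : 3 ≤ n) :
    quotientSet (Q1 m (-1) \ Q2 n (-1)) =
      Set.range (Q1 m) ∪ Set.range (fun p : ZMod m × ZMod n => QD m n p.1 p.2) := by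
  haveI : NeZero m := ⟨by omega⟩
  haveI : NeZero n := ⟨by omega⟩
  ext K
  constructor
  · rintro ⟨w, -, rfl⟩
    by_cases h2 : (2:Fin 3) ∈ w
    · exact Or.inl ⟨-1 - w.count 1, (lq_D_c h2).symm⟩
    · exact Or.inr ⟨(-1 - w.count 1, -1 - w.count 0), (lq_D_nc h2).symm⟩
  · rintro (⟨s, rfl⟩ | ⟨⟨s, t⟩, rfl⟩)
    · refine ⟨2 :: List.replicate (-1 - s).val 1,
        fun a _ => by rw [alpha_D hm hn]; trivial, ?_⟩
      rw [lq_D_c List.mem_cons_self]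
      have hc : (2 :: List.replicate (-1 - s).val 1 : List (Fin 3)).count 1 = (-1 - s).val := by
        simp [List.count_cons]
      rw [hc, vcast, sub_sub_cancel]
    · refine ⟨List.replicate (-1 - s).val 1 ++ List.replicate (-1 - t).val 0,
        fun a _ => by rw [alpha_D hm hn]; trivial, ?_⟩
      have h2 : (2:Fin 3) ∉ List.replicate (-1 - s).val 1 ++ List.replicate (-1 - t).val 0 := by
        rw [List.mem_append]
        rintro (h | h)
        · exact nm1 _ h
        · exact nm0 _ h
      rw [lq_D_nc h2]
      have hc1 : (List.replicate (-1 - s).val 1 ++ List.replicate (-1 - t).val 0 : List (Fin 3)).count 1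
          = (-1 - s).val := by
        rw [List.count_append, c11, c01, add_zero]
      have hc0 : (List.replicate (-1 - s).val 1 ++ List.replicate (-1 - t).val 0 : List (Fin 3)).count 0
          = (-1 - t).val := by
        rw [List.count_append, c10, c00, zero_add]
      rw [hc1, hc0, vcast, vcast, sub_sub_cancel, sub_sub_cancel]

-- membership tests
lemma test_x_Q1 {m : ℕ} [NeZero m] (s s' : ZMod m) :
    2 :: List.replicate s.val 1 ∈ Q1 m s' ↔ s' = s := by
  rw [mem_Q1]
  have hc : (2 :: List.replicate s.val 1 : List (Fin 3)).count 1 = s.val := by simp [List.count_cons]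
  rw [hc, vcast, eq_comm]

lemma test_x_QD {m n : ℕ} [NeZero m] (s s' : ZMod m) (t' : ZMod n) :
    2 :: List.replicate s.val 1 ∈ QD m n s' t' ↔ s' = s := by
  rw [mem_QD]
  have hq2 : 2 :: List.replicate s.val 1 ∉ Q2 n t' := by
    rw [mem_Q2]
    rintro ⟨hall, -⟩
    exact hall 2 List.mem_cons_self rfl
  rw [and_iff_left hq2]
  have hc : (2 :: List.replicate s.val 1 : List (Fin 3)).count 1 = s.val := by simp [List.count_cons]
  rw [hc, vcast, eq_comm]

lemma test_y_Q1 {m n : ℕ} [NeZero m] [NeZero n] (s s' : ZMod m) (t : ZMod n) :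
    List.replicate s.val 1 ++ List.replicate t.val 0 ∈ Q1 m s' ↔ s' = s := by
  rw [mem_Q1, List.count_append, c11, c01, add_zero, vcast, eq_comm]

lemma test_y_QD {m n : ℕ} [NeZero m] [NeZero n] (s s' : ZMod m) (t t' : ZMod n) :
    List.replicate s.val 1 ++ List.replicate t.val 0 ∈ QD m n s' t' ↔ (s' = s ∧ t' ≠ t) := by
  rw [mem_QD, List.count_append, c11, c01, add_zero, vcast, eq_comm (a := (s : ZMod m))]
  apply and_congr_right
  intro _
  rw [mem_Q2, List.count_append, c10, c00, zero_add, vcast]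
  constructor
  · intro h ht
    apply h
    refine ⟨?_, ht.symm⟩
    intro a ha
    rcases List.mem_append.1 ha with h' | h'
    · rw [List.eq_of_mem_replicate h']; decide
    · rw [List.eq_of_mem_replicate h']; decide
  · rintro h ⟨-, ht⟩
    exact h ht.symm

lemma test_rep0_Q2 {n : ℕ} [NeZero n] (t t' : ZMod n) :
    List.replicate t.val 0 ∈ Q2 n t' ↔ t' = t := by
  rw [mem_Q2, c00, vcast, eq_comm]
  refine and_iff_right ?_
  intro a ha
  rw [List.eq_of_mem_replicate ha]; decide

-- injectivity and disjointness
lemma Q1_inj {m : ℕ} [NeZero m] : Function.Injective (Q1 m) := by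
  intro s s' h
  have h1 : List.replicate s.val 1 ∈ Q1 m s := by rw [mem_Q1, c11, vcast]
  rw [h, mem_Q1, c11, vcast] at h1
  exact h1

lemma Q2_inj {n : ℕ} [NeZero n] : Function.Injective (Q2 n) := by
  intro t t' h
  have h1 : List.replicate t.val 0 ∈ Q2 n t := (test_rep0_Q2 t t).2 rfl
  rw [h, test_rep0_Q2] at h1
  exact h1.symm

lemma QD_inj {m n : ℕ} [NeZero m] [NeZero n] :
    Function.Injective (fun p : ZMod m × ZMod n => QD m n p.1 p.2) := by
  rintro ⟨s, t⟩ ⟨s', t'⟩ h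
  simp only at h
  have hs : s' = s := by
    have h1 : 2 :: List.replicate s.val 1 ∈ QD m n s t := (test_x_QD s s t).2 rfl
    rw [h, test_x_QD] at h1
    exact h1
  have ht : t' = t := by
    by_contra hne
    have h1 : List.replicate s.val 1 ++ List.replicate t.val 0 ∈ QD m n s' t' :=
      (test_y_QD s s' t t').2 ⟨hs, hne⟩
    rw [← h, test_y_QD] at h1
    exact h1.2 rfl
  rw [hs, ht]

lemma Q1_ne_QD {m n : ℕ} [NeZero m] [NeZero n] (s s' : ZMod m) (t' : ZMod n) :
    Q1 m s ≠ QD m n s' t' := by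
  intro h
  have h1 : 2 :: List.replicate s'.val 1 ∈ QD m n s' t' := (test_x_QD s' s' t').2 rfl
  rw [← h, test_x_Q1] at h1
  have h2 : List.replicate s'.val 1 ++ List.replicate t'.val 0 ∈ Q1 m s :=
    (test_y_Q1 s' s t').2 h1
  rw [h, test_y_QD] at h2
  exact h2.2 rfl

lemma ncard_range {α β : Type*} [Finite α] {f : α → β} (hf : Function.Injective f) :
    (Set.range f).ncard = Nat.card α := by
  rw [← Set.image_univ, Set.ncard_image_of_injective _ hf, Set.ncard_univ]

end DT

/-- the bound `m·n + m` for difference is tight, with the alphabet of `L`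
a proper two-letter subset of the three-letter alphabet of `L'`. -/
theorem difference_tight (m n : ℕ) (hm : 3 ≤ m) (hn : 3 ≤ n) :
    ∃ L' L : Language (Fin 3),
      (alphabetOf L').ncard = 3 ∧ (alphabetOf L).ncard = 2 ∧
      alphabetOf L ⊂ alphabetOf L' ∧
      HasComplexity L' m ∧ HasComplexity L n ∧
      HasComplexity (L' \ L) (m * n + m) := by
  haveI : NeZero m := ⟨by omega⟩
  haveI : NeZero n := ⟨by omega⟩
  refine ⟨DT.Q1 m (-1), DT.Q2 n (-1), ?_, ?_, ?_, ?_, ?_, ?_⟩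
  · rw [DT.alpha_L1 hm, Set.ncard_univ, Nat.card_eq_fintype_card, Fintype.card_fin]
  · rw [DT.alpha_L2 hn]
    have h : {a : Fin 3 | a ≠ 2} = {0, 1} := by
      ext a
      rcases DT.fin3 a with rfl | rfl | rfl <;> simp
    rw [h, Set.ncard_pair (by decide : (0 : Fin 3) ≠ 1)]
  · rw [DT.alpha_L1 hm, DT.alpha_L2 hn, Set.ssubset_univ_iff]
    intro h
    have h2 : (2:Fin 3) ∈ {a : Fin 3 | a ≠ 2} := h.symm ▸ Set.mem_univ _
    exact h2 rfl
  · refine ⟨?_, ?_⟩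
    · rw [DT.qs_L1 hm]; exact Set.finite_range _
    · rw [DT.qs_L1 hm, DT.ncard_range DT.Q1_inj, Nat.card_zmod]
  · refine ⟨?_, ?_⟩
    · rw [DT.qs_L2 hn]; exact Set.finite_range _
    · rw [DT.qs_L2 hn, DT.ncard_range DT.Q2_inj, Nat.card_zmod]
  · refine ⟨?_, ?_⟩
    · rw [DT.qs_D hm hn]
      exact (Set.finite_range _).union (Set.finite_range _)
    · rw [DT.qs_D hm hn]
      have hdisj : Disjoint (Set.range (DT.Q1 m))
          (Set.range (fun p : ZMod m × ZMod n => DT.QD m n p.1 p.2)) := by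
        rw [Set.disjoint_left]
        rintro K ⟨s, rfl⟩ ⟨⟨s', t'⟩, hK⟩
        exact DT.Q1_ne_QD s s' t' hK.symm
      rw [Set.ncard_union_eq hdisj (Set.finite_range _) (Set.finite_range _),
        DT.ncard_range DT.Q1_inj, DT.ncard_range DT.QD_inj, Nat.card_zmod]
      have : Nat.card (ZMod m × ZMod n) = m * n := by
        rw [Nat.card_prod, Nat.card_zmod, Nat.card_zmod]
      rw [this]
      omega
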